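/- arXiv:2410.15759 — 2 statements merged into one kernel-verified Lean document; each statement's English description precedes it below -/
import Mathlib

section
/- If $w \in A_\infty$ can be factorized as $w = uv$ with $u \in A_1$ and $v \in RH_\infty$, then the Fujii–Wilson $A_\infty$ constant of $w$ satisfies $[w]_{A_\infty} \lesssim [u]_{A_1}^2 [v]_{RH_\infty}^2$, up to a dimensional constant. -/
open MeasureTheory ENNReal Set Filter

noncomputable section

/-- The measure with density `w` with respect to the ambient volume. -/
def wMeasure {α : Type*} [MeasureSpace α] (w : α → ℝ) : Measure α :=
  (volume : Measure α).withDensity fun x => ENNReal.ofReal (w x)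

/-- The weak Lorentz `L^{q,∞}(μ)` quasi-norm. -/
def wLorentz {α E : Type*} [MeasurableSpace α] [Norm E] (q : ℝ) (μ : Measure α)
    (g : α → E) : ℝ≥0∞ :=
  ⨆ (t : ℝ) (_ : 0 < t), ENNReal.ofReal t * μ {x | t < ‖g x‖} ^ (1 / q)

/-- The weak Lorentz `L^{q,∞}(μ)` quasi-norm, for `ℝ≥0∞`-valued functions. -/
def wLorentzE {α : Type*} [MeasurableSpace α] (q : ℝ) (μ : Measure α)
    (g : α → ℝ≥0∞) : ℝ≥0∞ :=
  ⨆ (t : ℝ) (_ : 0 < t), ENNReal.ofReal t * μ {x | ENNReal.ofReal t < g x} ^ (1 / q)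

/-- The Lorentz `L^{p,r}(μ)` quasi-norm (computed via the distribution function). -/
def lorentz {α E : Type*} [MeasurableSpace α] [Norm E] (p r : ℝ) (μ : Measure α)
    (g : α → E) : ℝ≥0∞ :=
  (∫⁻ t in Set.Ioi (0 : ℝ), ENNReal.ofReal (t ^ (r - 1)) * μ {x | t < ‖g x‖} ^ (r / p)) ^ (1 / r)

/-- A weight: a locally integrable, a.e. positive function. -/
def IsWeight {α : Type*} [MeasureSpace α] [TopologicalSpace α] (w : α → ℝ) : Prop :=
  LocallyIntegrable w volume ∧ ∀ᵐ x : α ∂volume, 0 < w x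

abbrev Rn (n : ℕ) : Type := Fin n → ℝ

/-- The axis-parallel closed cube with center `c` and half side-length `r`. -/
def cube {n : ℕ} (c : Rn n) (r : ℝ) : Set (Rn n) := {x | ∀ i, |x i - c i| ≤ r}

/-- The Hardy–Littlewood maximal operator over cubes. -/
def maxOp {n : ℕ} (f : Rn n → ℝ) (x : Rn n) : ℝ≥0∞ :=
  ⨆ (c : Rn n) (r : ℝ) (_ : 0 < r) (_ : x ∈ cube c r),
    (∫⁻ y in cube c r, ENNReal.ofReal |f y|) / volume (cube c r)

/-- The `A₁` constant: the least `C` with `Mu ≤ C u` a.e. -/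
def A1Const {n : ℕ} (u : Rn n → ℝ) : ℝ≥0∞ :=
  sInf {C : ℝ≥0∞ | ∀ᵐ x : Rn n ∂volume, maxOp u x ≤ C * ENNReal.ofReal (u x)}

def MemA1 {n : ℕ} (u : Rn n → ℝ) : Prop := IsWeight u ∧ A1Const u < ⊤

/-- The `RH∞` constant `sup_Q (ess sup_Q v) |Q| / v(Q)`. -/
def RHinfConst {n : ℕ} (v : Rn n → ℝ) : ℝ≥0∞ :=
  ⨆ (c : Rn n) (r : ℝ) (_ : 0 < r),
    essSup (fun x => ENNReal.ofReal (v x)) (volume.restrict (cube c r)) * volume (cube c r)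
      / wMeasure v (cube c r)

/-- The Fujii–Wilson `A∞` constant. -/
def FWConst {n : ℕ} (w : Rn n → ℝ) : ℝ≥0∞ :=
  ⨆ (c : Rn n) (r : ℝ) (_ : 0 < r),
    (∫⁻ x in cube c r, maxOp ((cube c r).indicator w) x) / wMeasure w (cube c r)

/-- The Muckenhoupt `A_q` constant, `q > 1`. -/
def AqConst {n : ℕ} (q : ℝ) (w : Rn n → ℝ) : ℝ≥0∞ :=
  ⨆ (c : Rn n) (r : ℝ) (_ : 0 < r),
    (wMeasure w (cube c r) / volume (cube c r)) *
      ((∫⁻ x in cube c r, ENNReal.ofReal (w x ^ (1 - q / (q - 1)))) / volume (cube c r)) ^ (q - 1)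

/-- Membership in `A∞ = ⋃_{q>1} A_q`. -/
def MemAinf {n : ℕ} (w : Rn n → ℝ) : Prop := ∃ q : ℝ, 1 < q ∧ AqConst q w < ⊤

/-- The restricted `A_q^𝓡` constant. -/
def AqRConst {n : ℕ} (q : ℝ) (w : Rn n → ℝ) : ℝ≥0∞ :=
  ⨆ (c : Rn n) (r : ℝ) (_ : 0 < r) (E : Set (Rn n)) (_ : MeasurableSet E)
    (_ : E ⊆ cube c r) (_ : 0 < volume E),
    volume E / volume (cube c r) * (wMeasure w (cube c r) / wMeasure w E) ^ (1 / q)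

/-- The constant `[w]_{RH∞¹} = inf {[u]_{A₁}[v]_{RH∞} : w = uv}`. -/
def RH1Const {n : ℕ} (w : Rn n → ℝ) : ℝ≥0∞ :=
  sInf {C : ℝ≥0∞ | ∃ u v : Rn n → ℝ, (∀ x, w x = u x * v x) ∧ MemA1 u ∧ IsWeight v ∧
    RHinfConst v < ⊤ ∧ C = A1Const u * RHinfConst v}

/-- `S f = (M(|Tf|^{1/2}))²`. -/
def Sop {n : ℕ} (T : (Rn n → ℝ) → Rn n → ℝ) (f : Rn n → ℝ) (x : Rn n) : ℝ≥0∞ :=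
  maxOp (fun y => |T f y| ^ ((2 : ℝ)⁻¹)) x ^ (2 : ℝ)

/-- Condition (C): for some `p₀` and increasing `φ`,
`∫ (Sf)^{p₀} w ≤ φ([w]_{A∞}) ∫ (Mf)^{p₀} w` for all `w ∈ A∞`. -/
def ConditionC {n : ℕ} (T : (Rn n → ℝ) → Rn n → ℝ) : Prop :=
  ∃ p0 : ℝ, 0 < p0 ∧ ∃ φ : ℝ≥0∞ → ℝ≥0∞, Monotone φ ∧
    ∀ w : Rn n → ℝ, IsWeight w → MemAinf w → ∀ f : Rn n → ℝ, Measurable f →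
      (∫⁻ x, Sop T f x ^ p0 * ENNReal.ofReal (w x)) < ⊤ →
      (∫⁻ x, Sop T f x ^ p0 * ENNReal.ofReal (w x)) ≤
        φ (FWConst w) * ∫⁻ x, maxOp f x ^ p0 * ENNReal.ofReal (w x)



section Helpers

lemma cube_eq {n : ℕ} (c : Rn n) (r : ℝ) :
    cube c r = Set.pi Set.univ (fun i => Icc (c i - r) (c i + r)) := by
  ext x
  simp only [cube, mem_setOf_eq, Set.mem_pi, mem_univ, mem_Icc, forall_true_left, abs_sub_le_iff]
  constructor <;> intro h i <;> have := h i <;> constructor <;> linarith [this.1, this.2]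

lemma measurableSet_cube {n : ℕ} (c : Rn n) (r : ℝ) : MeasurableSet (cube c r) := by
  rw [cube_eq]; exact MeasurableSet.univ_pi fun i => measurableSet_Icc

lemma isCompact_cube {n : ℕ} (c : Rn n) (r : ℝ) : IsCompact (cube c r) := by
  rw [cube_eq]; exact isCompact_univ_pi fun i => isCompact_Icc

lemma volume_cube {n : ℕ} (c : Rn n) (r : ℝ) :
    volume (cube c r) = ENNReal.ofReal (2*r) ^ n := by
  rw [cube_eq, volume_pi_pi]
  simp [Real.volume_Icc]
  ring_nf
  rw [ENNReal.ofReal_mul' (by norm_num), mul_pow, ENNReal.ofReal_ofNat]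

lemma volume_cube_pos {n : ℕ} (c : Rn n) {r : ℝ} (hr : 0 < r) : 0 < volume (cube c r) := by
  rw [volume_cube]
  exact ENNReal.pow_pos (by simp [hr]) n

lemma volume_cube_lt_top {n : ℕ} (c : Rn n) (r : ℝ) : volume (cube c r) < ⊤ := by
  rw [volume_cube]
  exact pow_lt_top ofReal_lt_top

lemma lintegral_abs_cube_lt_top {n : ℕ} {f : Rn n → ℝ} (hf : LocallyIntegrable f volume)
    (c : Rn n) (r : ℝ) : ∫⁻ y in cube c r, ENNReal.ofReal |f y| < ⊤ := by
  have h := (hf.integrableOn_isCompact (isCompact_cube c r)).hasFiniteIntegral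
  refine lt_of_le_of_lt (lintegral_mono fun y => ?_) h
  rw [← Real.norm_eq_abs, ofReal_norm]

lemma wMeasure_cube' {n : ℕ} (v : Rn n → ℝ) (c : Rn n) (r : ℝ) :
    wMeasure v (cube c r) = ∫⁻ y in cube c r, ENNReal.ofReal (v y) :=
  withDensity_apply _ (measurableSet_cube c r)

lemma wMeasure_cube_lt_top {n : ℕ} {v : Rn n → ℝ} (hv : LocallyIntegrable v volume)
    (c : Rn n) (r : ℝ) : wMeasure v (cube c r) < ⊤ := by
  rw [wMeasure_cube']
  refine lt_of_le_of_lt (lintegral_mono fun y => ?_) (lintegral_abs_cube_lt_top hv c r)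
  exact ENNReal.ofReal_le_ofReal (le_abs_self _)

lemma wMeasure_cube_ne_zero {n : ℕ} {v : Rn n → ℝ} (hv : IsWeight v) (c : Rn n) {r : ℝ}
    (hr : 0 < r) : wMeasure v (cube c r) ≠ 0 := by
  rw [wMeasure_cube']
  intro h0
  have ham : AEMeasurable (fun y => ENNReal.ofReal (v y)) (volume.restrict (cube c r)) :=
    ENNReal.measurable_ofReal.comp_aemeasurable hv.1.aestronglyMeasurable.aemeasurable.restrict
  have hz := (lintegral_eq_zero_iff' ham).mp h0
  have hpos : ∀ᵐ y ∂(volume.restrict (cube c r)), 0 < v y := ae_restrict_of_ae hv.2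
  have hfalse : ∀ᵐ y ∂(volume.restrict (cube c r)), False := by
    filter_upwards [hz, hpos] with y h1 h2
    simp only [Pi.zero_apply, ENNReal.ofReal_eq_zero] at h1
    linarith
  have : volume.restrict (cube c r) = 0 := ae_eq_bot.mp (eventually_false_iff_eq_bot.mp hfalse)
  have := (Measure.restrict_eq_zero).mp this
  exact (volume_cube_pos c hr).ne' this

lemma le_maxOp {n : ℕ} (f : Rn n → ℝ) {x c : Rn n} {r : ℝ} (hr : 0 < r) (hx : x ∈ cube c r) :
    (∫⁻ y in cube c r, ENNReal.ofReal |f y|) / volume (cube c r) ≤ maxOp f x :=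
  le_iSup_of_le c (le_iSup_of_le r (le_iSup_of_le hr (le_iSup_of_le hx le_rfl)))

lemma A1_ae {n : ℕ} {u : Rn n → ℝ} (hu : MemA1 u) :
    ∀ᵐ x : Rn n ∂volume, maxOp u x ≤ A1Const u * ENNReal.ofReal (u x) := by
  have hA : A1Const u ≠ ⊤ := hu.2.ne
  have hk : ∀ k : ℕ, ∀ᵐ x : Rn n ∂volume,
      maxOp u x ≤ (A1Const u + (↑(k+1) : ℝ≥0∞)⁻¹) * ENNReal.ofReal (u x) := by
    intro k
    have hlt : A1Const u < A1Const u + (↑(k+1) : ℝ≥0∞)⁻¹ :=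
      ENNReal.lt_add_right hA (by simp)
    obtain ⟨C, hC, hCl⟩ := sInf_lt_iff.mp hlt
    have hC' : ∀ᵐ x : Rn n ∂volume, maxOp u x ≤ C * ENNReal.ofReal (u x) := hC
    exact hC'.mono fun x hx => hx.trans (mul_le_mul_left hCl.le _)
  rw [← ae_all_iff] at hk
  refine hk.mono fun x hx => ?_
  refine ENNReal.le_of_forall_pos_le_add fun ε hε _ => ?_
  set a := ENNReal.ofReal (u x) with ha
  have hane : a ≠ ⊤ := ofReal_ne_top
  have hd : (↑ε : ℝ≥0∞) / (a + 1) ≠ 0 := by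
    simp [ENNReal.div_eq_top, ENNReal.div_eq_zero_iff, hε.ne',
      ENNReal.add_eq_top, hane]
  obtain ⟨m, hm⟩ := ENNReal.exists_inv_nat_lt hd
  calc maxOp u x ≤ (A1Const u + (↑(m+1) : ℝ≥0∞)⁻¹) * a := hx (m)
    _ = A1Const u * a + (↑(m+1) : ℝ≥0∞)⁻¹ * a := by ring
    _ ≤ A1Const u * a + ↑ε := by
        gcongr
        calc (↑(m+1) : ℝ≥0∞)⁻¹ * a ≤ ((↑ε : ℝ≥0∞)/(a+1)) * (a+1) := by
              gcongr
              · exact le_trans (ENNReal.inv_le_inv.mpr (by exact_mod_cast Nat.le_succ m)) hm.le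
              · exact le_self_add
          _ = ↑ε := ENNReal.div_mul_cancel (by simp) (by simp [hane, ENNReal.add_eq_top])

lemma maxOp_indicator_le {n : ℕ} {u v : Rn n → ℝ} (hvpos : ∀ᵐ x : Rn n ∂volume, 0 < v x)
    (c : Rn n) (r : ℝ)
    (hV : essSup (fun x => ENNReal.ofReal (v x)) (volume.restrict (cube c r)) ≠ ⊤) (x : Rn n) :
    maxOp ((cube c r).indicator fun y => u y * v y) x ≤
      essSup (fun x => ENNReal.ofReal (v x)) (volume.restrict (cube c r)) * maxOp u x := by
  set Q := cube c r with hQ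
  set V := essSup (fun x => ENNReal.ofReal (v x)) (volume.restrict Q) with hVdef
  refine iSup_le fun c' => iSup_le fun r' => iSup_le fun hr' => iSup_le fun hx => ?_
  set R := cube c' r' with hR
  have key : (∫⁻ y in R, ENNReal.ofReal |Q.indicator (fun y => u y * v y) y|) ≤
      V * ∫⁻ y in R, ENNReal.ofReal |u y| := by
    have h1 : ∀ y, ENNReal.ofReal |Q.indicator (fun y => u y * v y) y| =
        Q.indicator (fun y => ENNReal.ofReal |u y * v y|) y := by
      intro y; by_cases h : y ∈ Q <;> simp [h]
    rw [lintegral_congr h1, lintegral_indicator (measurableSet_cube c r) _,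
      Measure.restrict_restrict (measurableSet_cube c r)]
    have hae : ∀ᵐ y ∂(volume.restrict (Q ∩ R)),
        ENNReal.ofReal |u y * v y| ≤ V * ENNReal.ofReal |u y| := by
      have h2 : ∀ᵐ y ∂(volume.restrict (Q ∩ R)), ENNReal.ofReal (v y) ≤ V :=
        (ae_le_essSup _).filter_mono (ae_mono (Measure.restrict_mono inter_subset_left le_rfl))
      filter_upwards [h2, ae_restrict_of_ae hvpos] with y h2 h3
      rw [abs_mul, abs_of_pos h3, ENNReal.ofReal_mul (abs_nonneg _), mul_comm]
      exact mul_le_mul_left h2 _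
    calc (∫⁻ y in Q ∩ R, ENNReal.ofReal |u y * v y|)
        ≤ ∫⁻ y in Q ∩ R, V * ENNReal.ofReal |u y| := lintegral_mono_ae hae
      _ = V * ∫⁻ y in Q ∩ R, ENNReal.ofReal |u y| := lintegral_const_mul' _ _ hV
      _ ≤ V * ∫⁻ y in R, ENNReal.ofReal |u y| :=
          mul_le_mul_right (lintegral_mono_set inter_subset_right) V
  calc (∫⁻ y in R, ENNReal.ofReal |Q.indicator (fun y => u y * v y) y|) / volume R
      ≤ (V * ∫⁻ y in R, ENNReal.ofReal |u y|) / volume R := ENNReal.div_le_div_right key _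
    _ = V * ((∫⁻ y in R, ENNReal.ofReal |u y|) / volume R) := by
        rw [div_eq_mul_inv, div_eq_mul_inv, mul_assoc]
    _ ≤ V * maxOp u x := mul_le_mul_right (le_maxOp u hr' hx) V

end Helpers

/-- If `w = uv` with `u ∈ A₁` and `v ∈ RH∞`, then `[w]_{A∞} ≲ [u]_{A₁}² [v]_{RH∞}²`,
up to a dimensional constant. -/
theorem stmt0 (n : ℕ) :
    ∃ C : ℝ≥0∞, C < ⊤ ∧ ∀ u v : Rn n → ℝ, MemA1 u → IsWeight v → RHinfConst v < ⊤ →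
      FWConst (fun x => u x * v x) ≤ C * A1Const u ^ 2 * RHinfConst v ^ 2 := by
  refine ⟨1, one_lt_top, fun u v hu hv hRHlt => ?_⟩
  set A := A1Const u with hAdef
  set RH := RHinfConst v with hRHdef
  have hA : A ≠ ⊤ := hu.2.ne
  have hRHne : RH ≠ ⊤ := hRHlt.ne
  -- RH ≥ 1
  have h1RH : 1 ≤ RH := by
    set Q := cube (0 : Rn n) 1 with hQ0
    set V := essSup (fun x => ENNReal.ofReal (v x)) (volume.restrict Q) with hV0
    have hvQ0 : wMeasure v Q ≠ 0 := wMeasure_cube_ne_zero hv 0 one_pos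
    have hvQt : wMeasure v Q ≠ ⊤ := (wMeasure_cube_lt_top hv.1 0 1).ne
    have hint : wMeasure v Q ≤ V * volume Q := by
      rw [wMeasure_cube']
      calc (∫⁻ y in Q, ENNReal.ofReal (v y)) ≤ ∫⁻ _ in Q, V :=
            lintegral_mono_ae (ENNReal.ae_le_essSup _)
        _ = V * volume Q := by rw [setLIntegral_const]
    have : (1 : ℝ≥0∞) = wMeasure v Q / wMeasure v Q := (ENNReal.div_self hvQ0 hvQt).symm
    rw [this]
    refine le_trans (ENNReal.div_le_div_right hint _) ?_
    exact le_iSup_of_le 0 (le_iSup_of_le 1 (le_iSup_of_le one_pos le_rfl))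
  -- main estimate : FWConst w ≤ A^2 * RH
  have main : FWConst (fun x => u x * v x) ≤ A ^ 2 * RH := by
    refine iSup_le fun c => iSup_le fun r => iSup_le fun hr => ?_
    set Q := cube c r with hQ
    set V := essSup (fun x => ENNReal.ofReal (v x)) (volume.restrict Q) with hVdef
    set Iu := ∫⁻ y in Q, ENNReal.ofReal |u y| with hIu
    set K := Iu / volume Q with hKdef
    have hvolne0 : volume Q ≠ 0 := (volume_cube_pos c hr).ne'
    have hvolnetop : volume Q ≠ ⊤ := (volume_cube_lt_top c r).ne
    have hvQnetop : wMeasure v Q ≠ ⊤ := (wMeasure_cube_lt_top hv.1 c r).ne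
    have hvQne0 : wMeasure v Q ≠ 0 := wMeasure_cube_ne_zero hv c hr
    have hIut : Iu ≠ ⊤ := (lintegral_abs_cube_lt_top hu.1.1 c r).ne
    have hKt : K ≠ ⊤ := (ENNReal.div_lt_top hIut hvolne0).ne
    have hRHterm : V * volume Q / wMeasure v Q ≤ RH :=
      le_iSup_of_le c (le_iSup_of_le r (le_iSup_of_le hr le_rfl))
    have hVvol : V * volume Q ≤ RH * wMeasure v Q :=
      (ENNReal.div_le_iff_le_mul (Or.inl hvQne0) (Or.inl hvQnetop)).mp hRHterm
    have hVne : V ≠ ⊤ := by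
      intro hVtop
      rw [hVtop, ENNReal.top_mul hvolne0] at hVvol
      exact (ENNReal.mul_ne_top hRHne hvQnetop) (top_le_iff.mp hVvol)
    -- step : K * v(Q) ≤ A * w(Q)
    have hwQ : wMeasure (fun x => u x * v x) Q
        = ∫⁻ y in Q, ENNReal.ofReal |u y| * ENNReal.ofReal (v y) := by
      rw [wMeasure_cube']
      refine lintegral_congr_ae ?_
      filter_upwards [ae_restrict_of_ae hu.1.2, ae_restrict_of_ae hv.2] with y hupos hvpos
      rw [ENNReal.ofReal_mul hupos.le, abs_of_pos hupos]
    have hK : K * wMeasure v Q ≤ A * wMeasure (fun x => u x * v x) Q := by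
      have hae : ∀ᵐ x ∂(volume.restrict Q),
          K * ENNReal.ofReal (v x) ≤ A * (ENNReal.ofReal |u x| * ENNReal.ofReal (v x)) := by
        filter_upwards [ae_restrict_of_ae (A1_ae hu), ae_restrict_of_ae hu.1.2,
          ae_restrict_mem (measurableSet_cube c r)] with x hA1 hupos hxQ
        have h1 : K ≤ A * ENNReal.ofReal |u x| := by
          rw [abs_of_pos hupos]
          exact (le_maxOp u hr hxQ).trans hA1
        calc K * ENNReal.ofReal (v x) ≤ (A * ENNReal.ofReal |u x|) * ENNReal.ofReal (v x) :=
              mul_le_mul_left h1 _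
          _ = A * (ENNReal.ofReal |u x| * ENNReal.ofReal (v x)) := by rw [mul_assoc]
      calc K * wMeasure v Q = ∫⁻ x in Q, K * ENNReal.ofReal (v x) := by
            rw [wMeasure_cube', lintegral_const_mul' _ _ hKt]
        _ ≤ ∫⁻ x in Q, A * (ENNReal.ofReal |u x| * ENNReal.ofReal (v x)) :=
            lintegral_mono_ae hae
        _ = A * wMeasure (fun x => u x * v x) Q := by rw [lintegral_const_mul' _ _ hA, hwQ]
    -- numerator bound
    have hN : (∫⁻ x in Q, maxOp (Q.indicator fun y => u y * v y) x) ≤ V * A * Iu := by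
      have hae : ∀ᵐ x ∂(volume.restrict Q),
          maxOp (Q.indicator fun y => u y * v y) x ≤ V * A * ENNReal.ofReal |u x| := by
        filter_upwards [ae_restrict_of_ae (A1_ae hu), ae_restrict_of_ae hu.1.2] with x hA1 hupos
        calc maxOp (Q.indicator fun y => u y * v y) x ≤ V * maxOp u x :=
              maxOp_indicator_le hv.2 c r hVne x
          _ ≤ V * (A * ENNReal.ofReal (u x)) := mul_le_mul_right hA1 _
          _ = V * A * ENNReal.ofReal |u x| := by rw [abs_of_pos hupos, mul_assoc]
      calc (∫⁻ x in Q, maxOp (Q.indicator fun y => u y * v y) x)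
          ≤ ∫⁻ x in Q, V * A * ENNReal.ofReal |u x| := lintegral_mono_ae hae
        _ = V * A * Iu := lintegral_const_mul' _ _ (ENNReal.mul_ne_top hVne hA)
    -- combine
    have hcancel : V * Iu ≤ A * RH * wMeasure (fun x => u x * v x) Q := by
      have hmul := mul_le_mul' hVvol hK
      have hKQ : K * volume Q = Iu := ENNReal.div_mul_cancel hvolne0 hvolnetop
      have hl : V * volume Q * (K * wMeasure v Q) = (V * Iu) * wMeasure v Q := by
        rw [← hKQ]; ring
      have hrw : RH * wMeasure v Q * (A * wMeasure (fun x => u x * v x) Q)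
          = (A * RH * wMeasure (fun x => u x * v x) Q) * wMeasure v Q := by ring
      rw [hl, hrw] at hmul
      exact (ENNReal.mul_le_mul_iff_left hvQne0 hvQnetop).mp hmul
    refine ENNReal.div_le_of_le_mul ?_
    calc (∫⁻ x in Q, maxOp (Q.indicator fun y => u y * v y) x) ≤ V * A * Iu := hN
      _ = A * (V * Iu) := by ring
      _ ≤ A * (A * RH * wMeasure (fun x => u x * v x) Q) := mul_le_mul_right hcancel _
      _ = A ^ 2 * RH * wMeasure (fun x => u x * v x) Q := by ring
  calc FWConst (fun x => u x * v x) ≤ A ^ 2 * RH := main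
    _ ≤ A ^ 2 * (RH * RH) := mul_le_mul_right (le_mul_of_one_le_left zero_le h1RH) _
    _ = 1 * A ^ 2 * RH ^ 2 := by ring
end
end

section
/- For $q \ge 1$ the class $\widehat{A}_q$ is contained in $A_q^{\mathcal{R}}$: if $w = u (Mh)^{1-q}$ with $u \in A_1$ and $h \in L^1_{loc}(\mathbb{R}^n)$ (with $Mh < \infty$ a.e.), then $w \in A_q^{\mathcal{R}}$ and $[w]_{A_q^{\mathcal{R}}} \lesssim [u]_{A_1}^{1/q}$. -/
open MeasureTheory ENNReal Set Filter

noncomputable section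

namespace AqR
open Topology
variable {n : ℕ}

lemma cube_eq_closedBall (c : Rn n) {r : ℝ} (hr : 0 ≤ r) :
    cube c r = Metric.closedBall c r := by
  ext x
  simp only [cube, mem_setOf_eq, Metric.mem_closedBall, dist_pi_le_iff hr, Real.dist_eq]

lemma isClosed_cube (c : Rn n) (r : ℝ) : IsClosed (cube c r) := by
  have : cube c r = ⋂ i, (fun x : Rn n => |x i - c i|) ⁻¹' (Iic r) := by
    ext x; simp [cube]
  rw [this]
  exact isClosed_iInter fun i =>
    IsClosed.preimage (by fun_prop) isClosed_Iic

lemma measurableSet_cube (c : Rn n) (r : ℝ) : MeasurableSet (cube c r) :=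
  (isClosed_cube c r).measurableSet

lemma volume_cube (c : Rn n) {r : ℝ} (hr : 0 ≤ r) :
    volume (cube c r) = ENNReal.ofReal (2*r) ^ n := by
  have : cube c r = Set.pi Set.univ (fun i => Icc (c i - r) (c i + r)) := by
    ext x
    simp only [cube, mem_setOf_eq, Set.mem_univ_pi, mem_Icc, abs_sub_le_iff]
    exact forall_congr' fun i => by constructor <;> intro h <;> constructor <;> linarith [h.1, h.2]
  rw [this, volume_pi_pi]
  have : ∀ i : Fin n, volume (Icc (c i - r) (c i + r)) = ENNReal.ofReal (2*r) := by
    intro i; rw [Real.volume_Icc]; congr 1; ring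
  rw [Finset.prod_congr rfl (fun i _ => this i), Finset.prod_const, Finset.card_univ,
    Fintype.card_fin]

lemma volume_cube_pos (c : Rn n) {r : ℝ} (hr : 0 < r) : 0 < volume (cube c r) := by
  rw [volume_cube c hr.le]
  exact ENNReal.pow_pos (ENNReal.ofReal_pos.2 (by linarith)) n

lemma volume_cube_lt_top (c : Rn n) {r : ℝ} : volume (cube c r) < ⊤ := by
  rcases le_or_gt 0 r with hr | hr
  · rw [volume_cube c hr]; exact pow_lt_top ofReal_lt_top
  · refine lt_of_le_of_lt (measure_mono ?_) (show volume (cube c 0) < ⊤ by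
      rw [volume_cube c le_rfl]; simp [pow_lt_top])
    intro x hx i; exact le_trans (hx i) hr.le

lemma volume_cube_scale (c : Rn n) {k r : ℝ} (hk : 0 ≤ k) (hr : 0 ≤ r) :
    volume (cube c (k*r)) = ENNReal.ofReal k ^ n * volume (cube c r) := by
  rw [volume_cube c (mul_nonneg hk hr), volume_cube c hr, ← mul_pow, ← ENNReal.ofReal_mul hk]
  ring_nf

lemma cube_mono (c : Rn n) {r r' : ℝ} (h : r ≤ r') : cube c r ⊆ cube c r' :=
  fun x hx i => (hx i).trans h

lemma cube_subset_three {c c' : Rn n} {r r' : ℝ} {x : Rn n} (hx : x ∈ cube c r)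
    (hx' : x ∈ cube c' r') (h : r' ≤ r) : cube c' r' ⊆ cube c (3*r) := by
  intro y hy i
  have h1 := hx i; have h2 := hx' i; have h3 := hy i
  have : |y i - c i| ≤ |y i - c' i| + |c' i - x i| + |x i - c i| := by
    have := abs_sub_le (y i) (c' i) (x i)
    have := abs_sub_le (y i) (x i) (c i)
    have := abs_sub_le (y i) (c' i) (c i)
    have h4 := abs_sub_le (c' i) (x i) (c i)
    nlinarith [abs_nonneg (y i - c' i)]
  have h5 : |c' i - x i| = |x i - c' i| := abs_sub_comm _ _
  linarith [this, h5 ▸ le_refl (|c' i - x i|), h2, (abs_sub_comm (x i) (c' i)) ▸ hx' i]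

lemma cube_subset_three' {c c' : Rn n} {r r' : ℝ} {x : Rn n} (hx : x ∈ cube c r)
    (hx' : x ∈ cube c' r') (h : r ≤ r') : cube c r ⊆ cube c' (3*r') := by
  intro y hy i
  have h1 := hx i; have h2 := hx' i; have h3 := hy i
  calc |y i - c' i| ≤ |y i - x i| + |x i - c' i| := abs_sub_le _ _ _
    _ ≤ (|y i - c i| + |c i - x i|) + |x i - c' i| := by
        have := abs_sub_le (y i) (c i) (x i); linarith
    _ ≤ 3*r' := by
        have : |c i - x i| = |x i - c i| := abs_sub_comm _ _
        rw [this]; linarith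

lemma avg_le_maxOp {f : Rn n → ℝ} {x c : Rn n} {r : ℝ} (hr : 0 < r) (hx : x ∈ cube c r) :
    (∫⁻ y in cube c r, ENNReal.ofReal |f y|) / volume (cube c r) ≤ maxOp f x := by
  refine le_trans ?_ (le_iSup _ c)
  refine le_trans ?_ (le_iSup _ r)
  refine le_trans ?_ (le_iSup _ hr)
  exact le_iSup (fun _ : x ∈ cube c r => (∫⁻ y in cube c r, ENNReal.ofReal |f y|) / volume (cube c r)) hx

lemma maxOp_le_of_forall {f : Rn n → ℝ} {x : Rn n} {B : ℝ≥0∞}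
    (h : ∀ c r, 0 < r → x ∈ cube c r →
      (∫⁻ y in cube c r, ENNReal.ofReal |f y|) / volume (cube c r) ≤ B) :
    maxOp f x ≤ B := by
  refine iSup_le fun c => iSup_le fun r => iSup_le fun hr => iSup_le fun hx => h c r hr hx

lemma isOpen_maxOp_gt (f : Rn n → ℝ) (t : ℝ≥0∞) : IsOpen {x | t < maxOp f x} := by
  rcases eq_or_ne t ⊤ with rfl | htop
  · convert isOpen_empty
    ext x; simp
  rw [Metric.isOpen_iff]
  intro x hx
  simp only [mem_setOf_eq, maxOp, lt_iSup_iff] at hx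
  obtain ⟨c, r, hr, hxc, havg⟩ := hx
  set I := ∫⁻ y in cube c r, ENNReal.ofReal |f y| with hI
  -- find r'' > r with t * volume (cube c r'') < I
  have hex : ∃ r'' > r, t * volume (cube c r'') < I := by
    have hV : ∀ s : ℝ, 0 ≤ s → volume (cube c s) = ENNReal.ofReal (2*s) ^ n :=
      fun s hs => volume_cube c hs
    have htV : t * volume (cube c r) < I := by
      rw [ENNReal.lt_div_iff_mul_lt (Or.inl (volume_cube_pos c hr).ne')
        (Or.inl (volume_cube_lt_top c).ne)] at havg
      exact havg
    have hcont : Continuous fun s : ℝ => t * (ENNReal.ofReal (2*s)) ^ n := by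
      apply ENNReal.continuous_const_mul htop |>.comp
      exact (ENNReal.continuous_pow n).comp (ENNReal.continuous_ofReal.comp (by fun_prop))
    have h0 : t * (ENNReal.ofReal (2*r)) ^ n < I := by rwa [hV r hr.le] at htV
    have htend : Tendsto (fun s : ℝ => t * (ENNReal.ofReal (2*s)) ^ n) (𝓝[>] r)
        (𝓝 (t * (ENNReal.ofReal (2*r)) ^ n)) :=
      (hcont.continuousAt).mono_left nhdsWithin_le_nhds
    have hev : ∀ᶠ s in 𝓝[>] r, t * (ENNReal.ofReal (2*s)) ^ n < I :=
      htend.eventually_lt_const h0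
    obtain ⟨s, hs1, hs2⟩ := (hev.and self_mem_nhdsWithin).exists
    exact ⟨s, hs2, by rw [hV s (le_trans hr.le (le_of_lt hs2))]; exact hs1⟩
  obtain ⟨r'', hr'', hlt⟩ := hex
  refine ⟨r'' - r, by linarith, fun y hy => ?_⟩
  have hycube : y ∈ cube c r'' := by
    intro i
    have h1 : |y i - x i| ≤ dist y x := by
      have := dist_le_pi_dist y x i; rwa [Real.dist_eq] at this
    have h2 := hxc i
    have h3 : dist y x < r'' - r := Metric.mem_ball.1 hy
    refine le_of_lt ?_
    calc |y i - c i| ≤ |y i - x i| + |x i - c i| := abs_sub_le _ _ _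
      _ < (r'' - r) + r := by linarith [lt_of_le_of_lt h1 h3]
      _ = r'' := by ring
  have hrpos'' : 0 < r'' := lt_trans hr hr''
  refine lt_of_lt_of_le ?_ (avg_le_maxOp hrpos'' hycube)
  rw [ENNReal.lt_div_iff_mul_lt (Or.inl (volume_cube_pos c hrpos'').ne')
    (Or.inl (volume_cube_lt_top c).ne)]
  exact lt_of_lt_of_le hlt (lintegral_mono_set (cube_mono c hr''.le))

lemma weak11 (g : Rn n → ℝ) (t : ℝ≥0∞) (ht0 : t ≠ 0) (htop : t ≠ ⊤) :
    volume {x | t < maxOp g x} ≤ 4^n * (∫⁻ y, ENNReal.ofReal |g y|) / t := by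
  set I := ∫⁻ y, ENNReal.ofReal |g y| with hIdef
  rcases eq_or_ne I ⊤ with hItop | hItop
  · rw [hItop]
    have : (4:ℝ≥0∞)^n * ⊤ / t = ⊤ := by
      rw [ENNReal.mul_top (by positivity), ENNReal.top_div_of_ne_top htop]
    rw [this]; exact le_top
  rcases Nat.eq_zero_or_pos n with hn | hn
  · subst hn
    rcases Set.eq_empty_or_nonempty {x : Rn 0 | t < maxOp g x} with he | ⟨x, hx⟩
    · rw [he]; simp
    · simp only [mem_setOf_eq, maxOp, lt_iSup_iff] at hx
      obtain ⟨c, r, hr, hxc, havg⟩ := hx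
      have hvol1 : volume (cube c r) = 1 := by rw [volume_cube c hr.le]; simp
      have hmono : (∫⁻ y in cube c r, ENNReal.ofReal |g y|) ≤ I := by
        rw [hIdef]
        exact le_trans (lintegral_mono_set (subset_univ _)) (le_of_eq (setLIntegral_univ _))
      have htI : t < I := by
        rw [hvol1, div_one] at havg
        exact lt_of_lt_of_le havg hmono
      have huniv : volume (univ : Set (Rn 0)) = 1 := by
        have : (univ : Set (Rn 0)) = cube c r := by
          ext z; simp [cube]
        rw [this, hvol1]
      calc volume {x : Rn 0 | t < maxOp g x} ≤ volume univ := measure_mono (subset_univ _)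
        _ = 1 := huniv
        _ ≤ I / t := by
          rw [ENNReal.le_div_iff_mul_le (Or.inl ht0) (Or.inl htop), one_mul]
          exact htI.le
        _ ≤ 4^0 * I / t := by
          rw [pow_zero, one_mul]
  -- main case n ≥ 1
  set ν := volume.withDensity (fun y => ENNReal.ofReal |g y|) with hν
  have hνap : ∀ s : Set (Rn n), MeasurableSet s → ν s = ∫⁻ y in s, ENNReal.ofReal |g y| :=
    fun s hs => withDensity_apply _ hs
  have hνle : ∀ s : Set (Rn n), MeasurableSet s → ν s ≤ I := by
    intro s hs
    rw [hνap s hs, hIdef]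
    exact le_trans (lintegral_mono_set (subset_univ _)) (le_of_eq (setLIntegral_univ _))
  set T : Set (Rn n × ℝ) := {p | 0 < p.2 ∧ t * volume (cube p.1 p.2) < ν (cube p.1 p.2)}
    with hT
  set R : ℝ := max 1 ((I / t).toReal) with hR
  have hrad : ∀ p ∈ T, p.2 ≤ R := by
    intro p hp
    obtain ⟨hp1, hp2⟩ := hp
    have hvol : volume (cube p.1 p.2) ≤ I / t := by
      rw [ENNReal.le_div_iff_mul_le (Or.inl ht0) (Or.inl htop), mul_comm]
      exact le_trans hp2.le (hνle _ (measurableSet_cube _ _))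
    have hVfin : (I / t) ≠ ⊤ := by
      simp [ENNReal.div_eq_top, hItop, ht0]
    have h2r : (2 * p.2)^n ≤ (I/t).toReal := by
      rw [volume_cube _ hp1.le] at hvol
      have := ENNReal.toReal_mono hVfin hvol
      rwa [ENNReal.toReal_pow, ENNReal.toReal_ofReal (by linarith)] at this
    rcases le_or_gt (2 * p.2) 1 with h | h
    · calc p.2 ≤ 2 * p.2 := by linarith
        _ ≤ 1 := h
        _ ≤ R := le_max_left _ _
    · have h2 : 2 * p.2 ≤ (2 * p.2)^n := le_self_pow₀ (by linarith) (by omega)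
      calc p.2 ≤ 2*p.2 := by linarith
        _ ≤ (I/t).toReal := le_trans h2 h2r
        _ ≤ R := le_max_right _ _
  obtain ⟨U, hUT, hUdisj, hUcov⟩ :=
    Vitali.exists_disjoint_subfamily_covering_enlargement_closedBall T Prod.fst Prod.snd R hrad
      4 (by norm_num)
  have hcount : U.Countable := by
    have hsub : ∀ b : U, MeasurableSet (Metric.closedBall (b : Rn n × ℝ).1 (b : Rn n × ℝ).2) :=
      fun b => measurableSet_closedBall
    have hdisj : Pairwise (Function.onFun Disjoint fun b : U =>
        Metric.closedBall (b : Rn n × ℝ).1 (b : Rn n × ℝ).2) := by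
      intro b b' hne
      exact hUdisj b.2 b'.2 (Subtype.coe_injective.ne hne)
    have hcnt := MeasureTheory.Measure.countable_meas_pos_of_disjoint_iUnion
      (μ := (volume : Measure (Rn n))) hsub hdisj
    have hall : {i : U | 0 < volume (Metric.closedBall (i : Rn n × ℝ).1 (i : Rn n × ℝ).2)}
        = univ := by
      ext b
      simp only [mem_setOf_eq, mem_univ, iff_true]
      have hb := hUT b.2
      have hbr : (0:ℝ) < (b : Rn n × ℝ).2 := hb.1
      rw [← cube_eq_closedBall _ hbr.le]
      exact volume_cube_pos _ hbr
    rw [hall] at hcnt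
    exact Set.countable_coe_iff.mp (Set.countable_univ_iff.mp hcnt)
  have hcov : {x | t < maxOp g x} ⊆ ⋃ b ∈ U, Metric.closedBall b.1 (4 * b.2) := by
    intro x hx
    simp only [mem_setOf_eq, maxOp, lt_iSup_iff] at hx
    obtain ⟨c, r, hr, hxc, havg⟩ := hx
    have hp : (c, r) ∈ T := by
      refine ⟨hr, ?_⟩
      rw [hνap _ (measurableSet_cube _ _)]
      rw [ENNReal.lt_div_iff_mul_lt (Or.inl (volume_cube_pos c hr).ne')
        (Or.inl (volume_cube_lt_top c).ne)] at havg
      exact havg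
    obtain ⟨b, hbU, hbsub⟩ := hUcov _ hp
    refine mem_biUnion hbU (hbsub ?_)
    rw [show (c,r).1 = c from rfl, show (c,r).2 = r from rfl, ← cube_eq_closedBall _ hr.le]
    exact hxc
  have hterm : ∀ b : U, volume (Metric.closedBall (b : Rn n × ℝ).1 (4 * (b : Rn n × ℝ).2))
      ≤ 4^n * (ν (Metric.closedBall (b : Rn n × ℝ).1 (b : Rn n × ℝ).2) / t) := by
    intro b
    have hb := hUT b.2
    have hrb : (0:ℝ) < (b : Rn n × ℝ).2 := hb.1
    rw [← cube_eq_closedBall _ (by positivity), ← cube_eq_closedBall _ hrb.le,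
      volume_cube_scale _ (by norm_num) hrb.le]
    have h4 : ENNReal.ofReal 4 = (4:ℝ≥0∞) := by
      rw [show (4:ℝ) = ((4:ℕ):ℝ) by norm_num, ENNReal.ofReal_natCast]; norm_num
    rw [h4]
    gcongr
    rw [ENNReal.le_div_iff_mul_le (Or.inl ht0) (Or.inl htop), mul_comm]
    exact hb.2.le
  have hsum : ∑' b : U, ν (Metric.closedBall (b : Rn n × ℝ).1 (b : Rn n × ℝ).2) ≤ I := by
    rw [← measure_biUnion hcount ?hd (fun b _ => measurableSet_closedBall)]
    case hd =>
      intro b hb b' hb' hne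
      exact hUdisj hb hb' hne
    exact le_trans (measure_mono (subset_univ _)) (hνle univ MeasurableSet.univ)
  calc volume {x | t < maxOp g x}
      ≤ volume (⋃ b ∈ U, Metric.closedBall b.1 (4 * b.2)) := measure_mono hcov
    _ ≤ ∑' b : U, volume (Metric.closedBall (b : Rn n × ℝ).1 (4 * (b : Rn n × ℝ).2)) :=
        measure_biUnion_le _ hcount _
    _ ≤ ∑' b : U, 4^n * (ν (Metric.closedBall (b : Rn n × ℝ).1 (b : Rn n × ℝ).2) / t) :=
        ENNReal.tsum_le_tsum hterm
    _ = 4^n * (∑' b : U, ν (Metric.closedBall (b : Rn n × ℝ).1 (b : Rn n × ℝ).2)) / t := by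
        rw [ENNReal.tsum_mul_left, mul_div_assoc]
        congr 1
        simp only [div_eq_mul_inv]
        rw [ENNReal.tsum_mul_right]
    _ ≤ 4^n * I / t := by gcongr

/-- antitone rpow for nonpositive exponents -/
lemma rpow_le_rpow_of_nonpos {x y : ℝ≥0∞} {z : ℝ} (hz : z ≤ 0) (hxy : x ≤ y) :
    y ^ z ≤ x ^ z := by
  rcases eq_or_lt_of_le hz with rfl | hz'
  · simp
  · rw [← neg_neg z, ENNReal.rpow_neg y, ENNReal.rpow_neg x]
    exact ENNReal.inv_le_inv.2 (ENNReal.rpow_le_rpow hxy (by linarith))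

lemma rpow_pos' {x : ℝ≥0∞} (h0 : x ≠ 0) (ht : x ≠ ⊤) (z : ℝ) : 0 < x ^ z :=
  ENNReal.rpow_pos (lt_of_le_of_ne (zero_le) (Ne.symm h0)) ht

lemma rpow_lt_top' {x : ℝ≥0∞} (h0 : x ≠ 0) (ht : x ≠ ⊤) (z : ℝ) : x ^ z < ⊤ := by
  rcases le_or_gt 0 z with hz | hz
  · exact ENNReal.rpow_lt_top_of_nonneg hz ht
  · rw [← neg_neg z, ENNReal.rpow_neg]
    exact ENNReal.inv_lt_top.2 (rpow_pos' h0 ht _)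

/-- positivity of the integral of |u| for an a.e. positive u -/
lemma lintegral_abs_pos {u : Rn n → ℝ} (hu_meas : AEMeasurable u volume)
    (hu_pos : ∀ᵐ x : Rn n ∂volume, 0 < u x) {s : Set (Rn n)} (hs : MeasurableSet s)
    (hvs : 0 < volume s) : 0 < ∫⁻ y in s, ENNReal.ofReal |u y| := by
  rw [pos_iff_ne_zero]
  intro hzero
  have hmeas : AEMeasurable (fun y => ENNReal.ofReal |u y|) (volume.restrict s) :=
    ((ENNReal.measurable_ofReal.comp continuous_abs.measurable).comp_aemeasurable hu_meas).restrict
  rw [lintegral_eq_zero_iff' hmeas] at hzero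
  have hpos' : ∀ᵐ x ∂volume.restrict s, 0 < u x := ae_restrict_of_ae hu_pos
  have : ∀ᵐ _x ∂volume.restrict s, False := by
    filter_upwards [hzero, hpos'] with x h1 h2
    simp only [Pi.zero_apply, ENNReal.ofReal_eq_zero] at h1
    have := abs_pos.2 (ne_of_gt h2)
    linarith
  have h0' : volume.restrict s univ = 0 := by
    rw [ae_iff] at this
    simpa using this
  rw [Measure.restrict_apply_univ] at h0'
  exact absurd h0' hvs.ne'


lemma real_core {q D V W β : ℝ} (hq : 1 ≤ q) (hD : 1 ≤ D) (hβ : 0 < β) (hV : 0 < V)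
    (hW : 0 < W) :
    (W/V)^q * (β^(1-q) * V) ≤ (2*D)^q * ((D*(V/W)*β)^(1-q) * (W/2)) := by
  have hD0 : (0:ℝ) < D := by linarith
  have he : 0 < W/V := div_pos hW hV
  have hVW : 0 < V/W := div_pos hV hW
  have h1 : (D*(V/W)*β)^(1-q) = D^(1-q) * (V/W)^(1-q) * β^(1-q) := by
    rw [Real.mul_rpow (by positivity) (by positivity),
      Real.mul_rpow (by positivity) (by positivity)]
  have h2 : (V/W)^(1-q) = (W/V)^(q-1) := by
    rw [show V/W = (W/V)⁻¹ by rw [inv_div], Real.inv_rpow he.le, ← Real.rpow_neg he.le,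
      show -(1-q) = q-1 by ring]
  have h3 : (W/V)^q = (W/V)^(q-1) * (W/V) := by
    rw [show q = (q-1)+1 by ring, Real.rpow_add_one he.ne']
    ring_nf
  have h4 : (2*D)^q = 2^q * D^q := Real.mul_rpow (by norm_num) hD0.le
  have hDq : D^q * D^(1-q) = D := by
    rw [← Real.rpow_add hD0]; norm_num
  have h2q : (2:ℝ) ≤ 2^q := by
    calc (2:ℝ) = 2^(1:ℝ) := (Real.rpow_one 2).symm
      _ ≤ 2^q := Real.rpow_le_rpow_of_exponent_le (by norm_num) hq
  set P := (W/V)^(q-1) with hP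
  set B := β^(1-q) with hB
  have hPpos : 0 < P := Real.rpow_pos_of_pos he _
  have hBpos : 0 < B := Real.rpow_pos_of_pos hβ _
  rw [h1, h2, h3, h4]
  have hWV : W/V*V = W := div_mul_cancel₀ W hV.ne'
  calc P * (W/V) * (B * V) = P * B * (W/V*V) := by ring
    _ = P * B * W := by rw [hWV]
    _ ≤ 2^q * D^q * (D^(1-q) * P * B * (W/2)) := by
        have hexp : 2^q * D^q * (D^(1-q) * P * B * (W/2)) = (2^q * (D^q * D^(1-q))) * (P*B*W) / 2 := by
          ring
        rw [hexp, hDq]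
        have h2D : 2 ≤ 2^q * D := by nlinarith
        have hPBW : 0 < P*B*W := by positivity
        rw [le_div_iff₀ (by norm_num : (0:ℝ) < 2)]
        nlinarith
    _ = 2^q * D^q * (D^(1-q) * (W/V)^(q-1) * B * (W/2)) := by rw [hP]

lemma not_ae_false : ¬ (∀ᵐ x : Rn n ∂volume, False) := by
  intro hae
  rw [ae_iff] at hae
  simp only [not_false_iff, setOf_true] at hae
  have h1 : volume (cube (0:Rn n) 1) ≤ volume (univ : Set (Rn n)) := measure_mono (subset_univ _)
  rw [hae] at h1
  exact absurd (le_antisymm h1 (zero_le)) (volume_cube_pos (0:Rn n) one_pos).ne'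

lemma mem_cube_self (x : Rn n) {r : ℝ} (hr : 0 ≤ r) : x ∈ cube x r := by
  intro i; simpa using hr

theorem key {q : ℝ} (hq : 1 ≤ q) (u h : Rn n → ℝ) (hu_loc : LocallyIntegrable u volume)
    (hu_pos : ∀ᵐ x : Rn n ∂volume, 0 < u x) (hh : LocallyIntegrable h volume)
    (hMh : ∀ᵐ x : Rn n ∂volume, maxOp h x < ⊤) {K : ℝ≥0∞} (hKtop : K ≠ ⊤)
    (hK : ∀ᵐ x : Rn n ∂volume, maxOp u x ≤ K * ENNReal.ofReal (u x)) :
    AqRConst q (fun x => u x * (maxOp h x).toReal ^ (1-q)) ≤ (2*(2*12^n) : ℝ≥0∞) * K ^ (1/q) := by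
  have hq0 : (0:ℝ) < q := by linarith
  have h1q : (0:ℝ) < 1/q := by positivity
  have hU : AEMeasurable u volume := hu_loc.aestronglyMeasurable.aemeasurable
  have huae : ∀ᵐ y : Rn n ∂volume, ENNReal.ofReal |u y| = ENNReal.ofReal (u y) := by
    filter_upwards [hu_pos] with y hy
    rw [abs_of_pos hy]
  -- K ≠ 0
  have hMupos : ∀ x : Rn n, 0 < maxOp u x := by
    intro x
    refine lt_of_lt_of_le (ENNReal.div_pos ?_ (volume_cube_lt_top x).ne)
      (avg_le_maxOp one_pos (mem_cube_self x zero_le_one))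
    exact (lintegral_abs_pos hU hu_pos (measurableSet_cube x 1) (volume_cube_pos x one_pos)).ne'
  have hKne0 : K ≠ 0 := by
    rintro rfl
    refine not_ae_false (n := n) ?_
    filter_upwards [hK] with x hx
    rw [zero_mul] at hx
    exact absurd (le_antisymm hx (zero_le)) (hMupos x).ne'
  set C0 : ℝ≥0∞ := 2*(2*12^n) with hC0
  have hC0t : C0 ≠ ⊤ := by
    refine ENNReal.mul_ne_top (by norm_num) (ENNReal.mul_ne_top (by norm_num) (ENNReal.pow_ne_top (by norm_num)))
  have hC01 : 1 ≤ C0 := by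
    rw [hC0]
    calc (1:ℝ≥0∞) = 1*(1*1^n) := by simp
      _ ≤ 2*(2*12^n) := by gcongr <;> norm_num
  refine iSup_le fun c => iSup_le fun r => iSup_le fun hr => iSup_le fun E => iSup_le fun hE =>
    iSup_le fun hEQ => iSup_le fun hvE => ?_
  set w : Rn n → ℝ := fun x => u x * (maxOp h x).toReal ^ (1-q) with hw
  set Q : Set (Rn n) := cube c r with hQ
  have hQm : MeasurableSet Q := measurableSet_cube c r
  set VQ := volume Q with hVQ
  set VE := volume E with hVE
  have hVQ0 : 0 < VQ := volume_cube_pos c hr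
  have hVQt : VQ < ⊤ := volume_cube_lt_top c
  have hVEt : VE < ⊤ := lt_of_le_of_lt (measure_mono hEQ) hVQt
  have hVEQ : VE ≤ VQ := measure_mono hEQ
  -- u-part
  set uQ := ∫⁻ x in Q, ENNReal.ofReal (u x) with huQ
  have huQabs : ∫⁻ x in Q, ENNReal.ofReal |u x| = uQ :=
    lintegral_congr_ae (ae_restrict_of_ae huae)
  have huQ0 : 0 < uQ := huQabs ▸ lintegral_abs_pos hU hu_pos hQm hVQ0
  have huQt : uQ < ⊤ := by
    rw [← huQabs]
    have hint : IntegrableOn u Q volume := hu_loc.integrableOn_isCompact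
      (by rw [hQ, cube_eq_closedBall c hr.le]; exact isCompact_closedBall c r)
    refine lt_of_le_of_lt (le_of_eq (lintegral_congr fun y =>
      (Real.enorm_eq_ofReal_abs _).symm)) hint.2
  set c0 := uQ / VQ with hc0
  have hc00 : c0 ≠ 0 := by
    simp [hc0, ENNReal.div_eq_zero_iff, huQ0.ne', hVQt.ne]
  have hc0t : c0 ≠ ⊤ := (ENNReal.div_lt_top huQt.ne hVQ0.ne').ne
  set a := c0 / K with ha
  have ha0 : a ≠ 0 := by simp [ha, ENNReal.div_eq_zero_iff, hc00, hKtop]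
  have hat : a ≠ ⊤ := (ENNReal.div_lt_top hc0t hKne0).ne
  have haU : ∀ᵐ x ∂volume.restrict Q, a ≤ ENNReal.ofReal (u x) := by
    filter_upwards [ae_restrict_of_ae hK, ae_restrict_mem hQm] with x hx1 hx2
    have h1 : c0 ≤ K * ENNReal.ofReal (u x) := by
      refine le_trans ?_ hx1
      rw [hc0, ← huQabs]
      exact avg_le_maxOp hr hx2
    rw [ha, ENNReal.div_le_iff_le_mul (Or.inl hKne0) (Or.inl hKtop)]
    rwa [mul_comm] at h1
  have huQle : uQ ≤ K * a * VQ := by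
    rw [ha, ENNReal.mul_div_cancel hKne0 hKtop, hc0,
      ENNReal.div_mul_cancel hVQ0.ne' hVQt.ne]
  by_cases htriv : ∀ (c' : Rn n) (r' : ℝ), ∫⁻ y in cube c' r', ENNReal.ofReal |h y| = 0
  · -- trivial h
    have hM0 : ∀ x : Rn n, maxOp h x = 0 := by
      intro x
      refine le_antisymm (maxOp_le_of_forall fun c' r' h1 h2 => ?_) (zero_le)
      rw [htriv c' r', ENNReal.zero_div]
    rcases eq_or_lt_of_le hq with hq1 | hq1
    · -- q = 1
      have hwu : w = u := by
        funext x
        rw [hw, ← hq1]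
        norm_num
      rw [hwu]
      have hWQ : wMeasure u Q = uQ := by rw [wMeasure, withDensity_apply _ hQm]
      set uE := ∫⁻ x in E, ENNReal.ofReal (u x) with huE
      have hWE : wMeasure u E = uE := by rw [wMeasure, withDensity_apply _ hE]
      have huEa : a * VE ≤ uE := by
        calc a * VE = ∫⁻ _x in E, a := (setLIntegral_const E a).symm
          _ ≤ uE := by
            refine lintegral_mono_ae ?_
            exact Filter.Eventually.filter_mono (ae_mono (Measure.restrict_mono hEQ le_rfl)) haU
      have huE0 : uE ≠ 0 := by
        refine fun h0 => ha0 ?_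
        have := le_antisymm (h0 ▸ huEa) (zero_le)
        rcases mul_eq_zero.1 this with h1 | h1
        · exact h1
        · exact absurd h1 hvE.ne'
      have huEt : uE ≠ ⊤ := (lt_of_le_of_lt (lintegral_mono_set hEQ) huQt).ne
      rw [hWQ, hWE, ← hq1]
      norm_num
      -- goal now: VE/VQ * (uQ/uE) ≤ C0 * K
      calc VE/VQ * (uQ/uE) = (VE/VQ * uQ)/uE := by rw [mul_div_assoc]
        _ ≤ (VE/VQ * (K*a*VQ))/uE := by gcongr
        _ = (K*(a*VE))/uE := by
            rw [show VE/VQ * (K*a*VQ) = K*a*(VE/VQ*VQ) by ring,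
              ENNReal.div_mul_cancel hVQ0.ne' hVQt.ne, mul_assoc]
        _ ≤ (K*uE)/uE := by gcongr
        _ = K * (uE/uE) := by rw [mul_div_assoc]
        _ = K := by rw [ENNReal.div_self huE0 huEt, mul_one]
        _ ≤ C0 * K := le_mul_of_one_le_left (zero_le) hC01
    · -- q > 1
      have hw0 : ∀ x, w x = 0 := by
        intro x
        show u x * (maxOp h x).toReal ^ (1-q) = 0
        rw [hM0 x]
        simp only [ENNReal.toReal_zero]
        rw [Real.zero_rpow (by linarith), mul_zero]
      have hWz : ∀ s : Set (Rn n), MeasurableSet s → wMeasure w s = 0 := by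
        intro s hs
        rw [wMeasure, withDensity_apply _ hs]
        simp [hw0]
      rw [hWz Q hQm, hWz E hE, ENNReal.zero_div, ENNReal.zero_rpow_of_pos h1q, mul_zero]
      exact zero_le
  · -- nontrivial h
    push_neg at htriv
    obtain ⟨c₀, r₀, hc₀⟩ := htriv
    have hnormle : ∀ (z : Rn n) (i : Fin n), |z i| ≤ ‖z‖ := by
      intro z i
      have := norm_le_pi_norm z i
      rwa [Real.norm_eq_abs] at this
    have hbig : ∀ (R0 : ℝ), ‖c₀‖ + |r₀| ≤ R0 → cube c₀ r₀ ⊆ cube 0 R0 := by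
      intro R0 hR0 y hy i
      have h1 := hy i
      have h2 := hnormle c₀ i
      have h3 := le_abs_self r₀
      simp only [Pi.zero_apply, sub_zero]
      calc |y i| ≤ |y i - c₀ i| + |c₀ i| := by
            have := abs_sub_abs_le_abs_sub (y i) (c₀ i); linarith [abs_sub_le (y i) (c₀ i) 0]
        _ ≤ R0 := by linarith
    have hMpos : ∀ x : Rn n, 0 < maxOp h x := by
      intro x
      set R0 := ‖x‖ + (‖c₀‖ + |r₀|) + 1 with hR0
      have hR0pos : 0 < R0 := by positivity
      have hx0 : x ∈ cube 0 R0 := by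
        intro i
        simp only [Pi.zero_apply, sub_zero]
        have := hnormle x i
        have h2 : (0:ℝ) ≤ ‖c₀‖ + |r₀| := by positivity
        linarith
      have hsub : cube c₀ r₀ ⊆ cube 0 R0 := hbig R0 (by linarith [norm_nonneg x])
      refine lt_of_lt_of_le (ENNReal.div_pos ?_ (volume_cube_lt_top (0:Rn n)).ne)
        (avg_le_maxOp hR0pos hx0)
      exact fun h0 => hc₀ (le_antisymm (le_trans (lintegral_mono_set hsub) (le_of_eq h0))
        (zero_le))
    -- the infimum of Mh over Q
    set β := ⨅ (x : Rn n) (_ : x ∈ Q), maxOp h x with hβ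
    have hβle : ∀ x ∈ Q, β ≤ maxOp h x := fun x hx => iInf₂_le x hx
    have hβ0 : β ≠ 0 := by
      set R1 := ‖c‖ + |r| + (‖c₀‖ + |r₀|) + 1 with hR1
      have hR1pos : 0 < R1 := by positivity
      have hQsub : Q ⊆ cube 0 R1 := by
        intro y hy i
        simp only [Pi.zero_apply, sub_zero]
        have h1 := hy i
        have h2 := hnormle c i
        have h3 := le_abs_self r
        have h4 : (0:ℝ) ≤ ‖c₀‖ + |r₀| := by positivity
        calc |y i| ≤ |y i - c i| + |c i| := by
              have := abs_sub_le (y i) (c i) 0; simpa using this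
          _ ≤ R1 := by linarith
      have hc₀sub : cube c₀ r₀ ⊆ cube 0 R1 :=
        hbig R1 (by linarith [norm_nonneg c, abs_nonneg r])
      have hb0 : (0:ℝ≥0∞) <
          (∫⁻ y in cube (0:Rn n) R1, ENNReal.ofReal |h y|) / volume (cube (0:Rn n) R1) := by
        refine ENNReal.div_pos ?_ (volume_cube_lt_top (0:Rn n)).ne
        exact fun h0 => hc₀ (le_antisymm
          (le_trans (lintegral_mono_set hc₀sub) (le_of_eq h0)) (zero_le))
      have : (∫⁻ y in cube (0:Rn n) R1, ENNReal.ofReal |h y|) / volume (cube (0:Rn n) R1) ≤ β :=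
        le_iInf₂ fun x hx => avg_le_maxOp hR1pos (hQsub hx)
      exact fun hz => absurd (le_antisymm (hz ▸ this) (zero_le)) hb0.ne'
    have hβt : β < ⊤ := by
      have hne : (Q ∩ {x | maxOp h x < ⊤}).Nonempty := by
        rw [nonempty_iff_ne_empty]
        intro hemp
        have hsub : Q ⊆ {x | ¬ maxOp h x < ⊤} := by
          intro x hx
          by_contra hc'
          exact eq_empty_iff_forall_notMem.1 hemp x ⟨hx, not_not.1 hc'⟩
        have : volume Q = 0 := measure_mono_null hsub (by rw [← ae_iff]; exact hMh)
        exact absurd this hVQ0.ne'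
      obtain ⟨x₁, hx₁Q, hx₁⟩ := hne
      exact lt_of_le_of_lt (iInf₂_le x₁ hx₁Q) hx₁
    -- the 3Q cube and localization
    have hr3 : 0 < 3*r := by linarith
    set I3 := ∫⁻ y in cube c (3*r), ENNReal.ofReal |h y| with hI3
    have hI3t : I3 < ⊤ := by
      have hint : IntegrableOn h (cube c (3*r)) volume := hh.integrableOn_isCompact
        (by rw [cube_eq_closedBall c hr3.le]; exact isCompact_closedBall c (3*r))
      refine lt_of_le_of_lt (le_of_eq (lintegral_congr fun y =>
        (Real.enorm_eq_ofReal_abs _).symm)) hint.2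
    have hvolQ3 : volume (cube c (3*r)) = 3^n * VQ := by
      rw [volume_cube_scale c (by norm_num) hr.le]
      norm_num [ENNReal.ofReal_ofNat]
      rfl
    have hI3le : I3 ≤ β * (3^n * VQ) := by
      have h1 : I3 / volume (cube c (3*r)) ≤ β :=
        le_iInf₂ fun x hx => avg_le_maxOp hr3 (cube_mono c (by linarith) hx)
      rw [ENNReal.div_le_iff_le_mul (Or.inl (volume_cube_pos c hr3).ne')
        (Or.inl (volume_cube_lt_top c).ne)] at h1
      rw [← hvolQ3, mul_comm β]
      rwa [mul_comm] at h1
    set D : ℝ≥0∞ := 2*12^n with hD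
    have hDt : D ≠ ⊤ :=
      ENNReal.mul_ne_top (by norm_num) (ENNReal.pow_ne_top (by norm_num))
    have hD1 : 1 ≤ D := by
      rw [hD]
      calc (1:ℝ≥0∞) = 1*1^n := by simp
        _ ≤ 2*12^n := by gcongr <;> norm_num
    have hD3 : (3:ℝ≥0∞)^n ≤ D := by
      rw [hD]
      calc (3:ℝ≥0∞)^n ≤ 12^n := pow_le_pow_left' (by norm_num) n
        _ ≤ 2*12^n := le_mul_of_one_le_left (zero_le) one_le_two
    set f := VQ / VE with hf
    have hf1 : 1 ≤ f := by
      rw [hf, ENNReal.le_div_iff_mul_le (Or.inl hvE.ne') (Or.inl hVEt.ne), one_mul]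
      exact hVEQ
    have hf0 : f ≠ 0 := by intro h0; rw [h0] at hf1; exact absurd hf1 (by norm_num)
    have hft : f ≠ ⊤ := (ENNReal.div_lt_top hVQt.ne hvE.ne').ne
    set s := D * f * β with hs
    have hs0 : s ≠ 0 := by
      simp only [hs, mul_ne_zero_iff]
      refine ⟨⟨fun h0 => ?_, hf0⟩, hβ0⟩
      · rw [h0] at hD1; exact absurd hD1 (by norm_num)
    have hst : s ≠ ⊤ :=
      ENNReal.mul_ne_top (ENNReal.mul_ne_top hDt hft) hβt.ne
    have hs3 : 3^n * β ≤ s := by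
      rw [hs]
      refine mul_le_mul_left ?_ β
      calc (3:ℝ≥0∞)^n ≤ D := hD3
        _ = D * 1 := (mul_one D).symm
        _ ≤ D * f := mul_le_mul_right hf1 D
    -- the localized function G
    set G := (cube c (3*r)).indicator h with hG
    have hGabs : ∀ y, ENNReal.ofReal |G y| =
        (cube c (3*r)).indicator (fun y => ENNReal.ofReal |h y|) y := by
      intro y
      by_cases hy : y ∈ cube c (3*r)
      · rw [hG, indicator_of_mem hy, indicator_of_mem hy]
      · rw [hG, indicator_of_notMem hy, indicator_of_notMem hy]
        simp
    have hGint : ∫⁻ y, ENNReal.ofReal |G y| = I3 := by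
      rw [hI3, ← lintegral_indicator (measurableSet_cube c (3*r))]
      exact lintegral_congr fun y => hGabs y
    have hloc : ∀ x ∈ Q, maxOp h x ≤ max (maxOp G x) (3^n * β) := by
      intro x hx
      refine maxOp_le_of_forall fun c' r' hr' hx' => ?_
      rcases le_or_gt r' r with hle | hlt
      · refine le_max_of_le_left ?_
        have hsub := cube_subset_three hx hx' hle
        have heq : ∫⁻ y in cube c' r', ENNReal.ofReal |h y|
            = ∫⁻ y in cube c' r', ENNReal.ofReal |G y| := by
          refine setLIntegral_congr_fun (measurableSet_cube c' r') (fun y hy => ?_)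
          rw [hGabs, indicator_of_mem (hsub hy)]
        rw [heq]
        exact avg_le_maxOp hr' hx'
      · refine le_max_of_le_right ?_
        have h3r' : 0 < 3*r' := by linarith
        have hQsub' : Q ⊆ cube c' (3*r') := cube_subset_three' hx hx' hlt.le
        have havg' : (∫⁻ y in cube c' (3*r'), ENNReal.ofReal |h y|)
            / volume (cube c' (3*r')) ≤ β :=
          le_iInf₂ fun z hz => avg_le_maxOp h3r' (hQsub' hz)
        rw [ENNReal.div_le_iff_le_mul (Or.inl (volume_cube_pos c' h3r').ne')
          (Or.inl (volume_cube_lt_top c').ne)] at havg'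
        rw [ENNReal.div_le_iff_le_mul (Or.inl (volume_cube_pos c' hr').ne')
          (Or.inl (volume_cube_lt_top c').ne)]
        calc ∫⁻ y in cube c' r', ENNReal.ofReal |h y|
            ≤ ∫⁻ y in cube c' (3*r'), ENNReal.ofReal |h y| :=
              lintegral_mono_set (cube_mono c' (by linarith))
          _ ≤ β * volume (cube c' (3*r')) := havg'
          _ = β * (3^n * volume (cube c' r')) := by
              rw [volume_cube_scale c' (by norm_num) hr'.le]
              norm_num [ENNReal.ofReal_ofNat]
          _ = 3^n * β * volume (cube c' r') := by ring
    -- the exceptional set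
    set O := {x | s < maxOp h x} with hO
    have hOmeas : MeasurableSet O := (isOpen_maxOp_gt h s).measurableSet
    have hOsub : E ∩ O ⊆ {x | s < maxOp G x} := by
      rintro x ⟨hxE, hxO⟩
      have h1 : s < max (maxOp G x) (3^n * β) := lt_of_lt_of_le hxO (hloc x (hEQ hxE))
      rcases lt_max_iff.1 h1 with h2 | h2
      · exact h2
      · exact absurd (lt_of_le_of_lt hs3 h2) (lt_irrefl _)
    have h22 : (2:ℝ≥0∞) * 2⁻¹ = 1 := ENNReal.mul_inv_cancel (by norm_num) (by norm_num)
    have hOvol : volume (E ∩ O) ≤ VE / 2 := by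
      refine le_trans (measure_mono hOsub) ?_
      refine le_trans (weak11 G s hs0 hst) ?_
      rw [hGint, ENNReal.div_le_iff_le_mul (Or.inl hs0) (Or.inl hst)]
      calc (4:ℝ≥0∞)^n * I3 ≤ 4^n * (β * (3^n * VQ)) := mul_le_mul_right hI3le _
        _ = 12^n * β * VQ := by
            rw [show (12:ℝ≥0∞) = 4*3 by norm_num, mul_pow]
            ring
        _ = VE / 2 * s := by
            have hVEf : VE * f = VQ := ENNReal.mul_div_cancel hvE.ne' hVEt.ne
            rw [hs, hD, div_eq_mul_inv]
            calc (12:ℝ≥0∞)^n * β * VQ = 12^n * β * (VE * f) := by rw [hVEf]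
              _ = 12^n * β * (VE * f) * 1 := (mul_one _).symm
              _ = 12^n * β * (VE * f) * (2 * 2⁻¹) := by rw [h22]
              _ = VE * 2⁻¹ * (2 * 12 ^ n * f * β) := by ring
    set A := E \ O with hA
    have hAm : MeasurableSet A := hE.diff hOmeas
    have hAE : A ⊆ E := diff_subset
    have hvolA : VE/2 ≤ volume A := by
      have hsplit : E ⊆ A ∪ (E ∩ O) := by
        intro x hx
        by_cases hxO : x ∈ O
        · exact Or.inr ⟨hx, hxO⟩
        · exact Or.inl ⟨hx, hxO⟩
      have h2 : VE ≤ volume A + VE/2 := by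
        refine le_trans (measure_mono hsplit) (le_trans (measure_union_le _ _) ?_)
        exact add_le_add_right hOvol _
      have h3 := tsub_le_iff_right.2 h2
      rwa [ENNReal.sub_half hVEt.ne] at h3
    -- pointwise density identity
    have hWae : ∀ᵐ x : Rn n ∂volume, ENNReal.ofReal (w x)
        = ENNReal.ofReal (u x) * (maxOp h x)^(1-q) := by
      filter_upwards [hu_pos, hMh] with x hx1 hx2
      have ht0 : 0 < (maxOp h x).toReal := ENNReal.toReal_pos (hMpos x).ne' hx2.ne
      show ENNReal.ofReal (u x * (maxOp h x).toReal ^ (1-q)) = _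
      rw [ENNReal.ofReal_mul hx1.le]
      congr 1
      conv_rhs => rw [← ENNReal.ofReal_toReal hx2.ne]
      rw [ENNReal.ofReal_rpow_of_pos ht0]
    set wQ := wMeasure w Q with hwQdef
    set wE := wMeasure w E with hwEdef
    have hβqt : β^(1-q) ≠ ⊤ := (rpow_lt_top' hβ0 hβt.ne _).ne
    have hwQ : wQ ≤ β^(1-q) * (K*a*VQ) := by
      rw [hwQdef, wMeasure, withDensity_apply _ hQm]
      calc ∫⁻ x in Q, ENNReal.ofReal (w x)
          = ∫⁻ x in Q, ENNReal.ofReal (u x) * (maxOp h x)^(1-q) :=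
            lintegral_congr_ae (ae_restrict_of_ae hWae)
        _ ≤ ∫⁻ x in Q, β^(1-q) * ENNReal.ofReal (u x) := by
            refine lintegral_mono_ae ?_
            filter_upwards [ae_restrict_mem hQm] with x hx
            rw [mul_comm (β^(1-q))]
            exact mul_le_mul_right (rpow_le_rpow_of_nonpos (by linarith) (hβle x hx)) _
        _ = β^(1-q) * uQ := lintegral_const_mul' _ _ hβqt
        _ ≤ β^(1-q) * (K*a*VQ) := mul_le_mul_right huQle _
    have hwE : s^(1-q) * a * (VE/2) ≤ wE := by
      rw [hwEdef, wMeasure, withDensity_apply _ hE]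
      calc s^(1-q)*a*(VE/2) ≤ s^(1-q)*a*volume A := mul_le_mul_right hvolA _
        _ = ∫⁻ _x in A, s^(1-q)*a := (setLIntegral_const A _).symm
        _ ≤ ∫⁻ x in A, ENNReal.ofReal (w x) := by
            refine lintegral_mono_ae ?_
            have h1 : ∀ᵐ x ∂volume.restrict A, a ≤ ENNReal.ofReal (u x) :=
              Filter.Eventually.filter_mono
                (ae_mono (Measure.restrict_mono (hAE.trans hEQ) le_rfl)) haU
            filter_upwards [ae_restrict_mem hAm, h1, ae_restrict_of_ae hWae]
              with x hxA hxa hxw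
            rw [hxw]
            have hMs : maxOp h x ≤ s := not_lt.1 hxA.2
            calc s^(1-q)*a = a * s^(1-q) := by ring
              _ ≤ ENNReal.ofReal (u x) * (maxOp h x)^(1-q) :=
                mul_le_mul' hxa (rpow_le_rpow_of_nonpos (by linarith) hMs)
        _ ≤ ∫⁻ x in E, ENNReal.ofReal (w x) := lintegral_mono_set hAE
    have hwEwQ : wE ≤ wQ := by
      rw [hwQdef, hwEdef, wMeasure, withDensity_apply _ hQm, withDensity_apply _ hE]
      exact lintegral_mono_set hEQ
    have hwQt : wQ ≠ ⊤ := by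
      refine (lt_of_le_of_lt hwQ ?_).ne
      exact ENNReal.mul_lt_top (rpow_lt_top' hβ0 hβt.ne _)
        (ENNReal.mul_lt_top (ENNReal.mul_lt_top (lt_top_iff_ne_top.2 hKtop)
          (lt_top_iff_ne_top.2 hat)) hVQt)
    have hwEt : wE ≠ ⊤ := (lt_of_le_of_lt hwEwQ (lt_top_iff_ne_top.2 hwQt)).ne
    have hwE0 : wE ≠ 0 := by
      intro h0
      have := h0 ▸ hwE
      have hpos : (0:ℝ≥0∞) < s^(1-q)*a*(VE/2) := by
        refine ENNReal.mul_pos (mul_ne_zero (rpow_pos' hs0 hst _).ne' ha0) ?_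
        simp [ENNReal.div_eq_zero_iff, hvE.ne']
      exact absurd (le_antisymm this (zero_le)) hpos.ne'
    -- the key inequality via reals
    set e := VE / VQ with he
    have het : e ≠ ⊤ := (ENNReal.div_lt_top hVEt.ne hVQ0.ne').ne
    have he0 : e ≠ 0 := by simp [he, ENNReal.div_eq_zero_iff, hvE.ne', hVQt.ne]
    have hG1 : e^q * wQ ≤ (C0^q * K) * wE := by
      have hLt : e^q * wQ ≠ ⊤ := ENNReal.mul_ne_top (rpow_lt_top' he0 het _).ne hwQt
      have hC0q : C0^q ≠ ⊤ := (rpow_lt_top' (by rw [hC0]; positivity) hC0t _).ne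
      have hRt : (C0^q * K) * wE ≠ ⊤ :=
        ENNReal.mul_ne_top (ENNReal.mul_ne_top hC0q hKtop) hwEt
      rw [← ENNReal.toReal_le_toReal hLt hRt]
      rw [ENNReal.toReal_mul, ENNReal.toReal_mul, ENNReal.toReal_mul,
        ← ENNReal.toReal_rpow, ← ENNReal.toReal_rpow]
      -- real abbreviations
      have hVQR : (0:ℝ) < VQ.toReal := ENNReal.toReal_pos hVQ0.ne' hVQt.ne
      have hVER : (0:ℝ) < VE.toReal := ENNReal.toReal_pos hvE.ne' hVEt.ne
      have hβR : (0:ℝ) < β.toReal := ENNReal.toReal_pos hβ0 hβt.ne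
      have hKR : (0:ℝ) ≤ K.toReal := ENNReal.toReal_nonneg
      have haR : (0:ℝ) ≤ a.toReal := ENNReal.toReal_nonneg
      have heR : e.toReal = VE.toReal / VQ.toReal := by rw [he, ENNReal.toReal_div]
      have hfR : f.toReal = VQ.toReal / VE.toReal := by rw [hf, ENNReal.toReal_div]
      have hDR : (1:ℝ) ≤ D.toReal := by
        have := ENNReal.toReal_mono hDt hD1
        simpa using this
      have hsR : s.toReal = D.toReal * (VQ.toReal/VE.toReal) * β.toReal := by
        rw [hs, ENNReal.toReal_mul, ENNReal.toReal_mul, hfR]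
      have hC0R : C0.toReal = 2 * D.toReal := by
        rw [hC0, hD, ENNReal.toReal_mul]
        norm_num
      have hwQR : wQ.toReal ≤ β.toReal^(1-q) * (K.toReal*a.toReal*VQ.toReal) := by
        have h1 := ENNReal.toReal_mono
          (ENNReal.mul_ne_top hβqt (ENNReal.mul_ne_top (ENNReal.mul_ne_top hKtop hat) hVQt.ne))
          hwQ
        rwa [ENNReal.toReal_mul, ENNReal.toReal_mul, ENNReal.toReal_mul,
          ← ENNReal.toReal_rpow] at h1
      have hwER : s.toReal^(1-q) * a.toReal * (VE.toReal/2) ≤ wE.toReal := by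
        have h1 := ENNReal.toReal_mono hwEt hwE
        rw [ENNReal.toReal_mul, ENNReal.toReal_mul, ← ENNReal.toReal_rpow] at h1
        convert h1 using 2
        rw [ENNReal.toReal_div]
        norm_num
      have hcore := real_core hq hDR hβR hVQR hVER
      calc e.toReal^q * wQ.toReal
          ≤ e.toReal^q * (β.toReal^(1-q) * (K.toReal*a.toReal*VQ.toReal)) := by
            refine mul_le_mul_of_nonneg_left hwQR ?_
            have : (0:ℝ) ≤ e.toReal := ENNReal.toReal_nonneg
            positivity
        _ = ((VE.toReal/VQ.toReal)^q * (β.toReal^(1-q) * VQ.toReal)) * (K.toReal*a.toReal) := by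
            rw [heR]; ring
        _ ≤ ((2*D.toReal)^q * ((D.toReal*(VQ.toReal/VE.toReal)*β.toReal)^(1-q)
              * (VE.toReal/2))) * (K.toReal*a.toReal) := by
            refine mul_le_mul_of_nonneg_right hcore (by positivity)
        _ = C0.toReal^q * K.toReal * (s.toReal^(1-q)*a.toReal*(VE.toReal/2)) := by
            rw [hC0R, hsR]; ring
        _ ≤ C0.toReal^q * K.toReal * wE.toReal := by
            refine mul_le_mul_of_nonneg_left hwER ?_
            have h2D : (0:ℝ) < 2*D.toReal := by linarith
            have : (0:ℝ) ≤ C0.toReal^q := by rw [hC0R]; positivity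
            positivity
    -- conclude
    have hstep1 : e * (wQ/wE)^(1/q) = (e^q * (wQ/wE))^(1/q) := by
      rw [ENNReal.mul_rpow_of_nonneg (e^q) (wQ/wE) (le_of_lt h1q),
        ← ENNReal.rpow_mul e q (1/q), mul_one_div_cancel hq0.ne', ENNReal.rpow_one]
    calc e * (wQ/wE)^(1/q) = (e^q * (wQ/wE))^(1/q) := hstep1
      _ ≤ (C0^q * K)^(1/q) := by
          refine ENNReal.rpow_le_rpow ?_ (le_of_lt h1q)
          calc e^q * (wQ/wE) = (e^q * wQ)/wE := by rw [mul_div_assoc]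
            _ ≤ ((C0^q*K)*wE)/wE := by gcongr
            _ = (C0^q*K) * (wE/wE) := by rw [mul_div_assoc]
            _ = C0^q*K := by rw [ENNReal.div_self hwE0 hwEt, mul_one]
      _ = C0 * K^(1/q) := by
          rw [ENNReal.mul_rpow_of_nonneg (C0^q) K (le_of_lt h1q),
            ← ENNReal.rpow_mul C0 q (1/q), mul_one_div_cancel hq0.ne', ENNReal.rpow_one]

end AqR

/-- `Â_q ⊆ A_q^𝓡`: if `w = u (Mh)^{1-q}` with `u ∈ A₁` and `h ∈ L¹_loc` with `Mh < ∞` a.e.,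
then `w ∈ A_q^𝓡` with `[w]_{A_q^𝓡} ≲ [u]_{A₁}^{1/q}`. -/
theorem stmt4 (n : ℕ) (q : ℝ) (hq : 1 ≤ q) :
    ∃ C : ℝ≥0∞, C < ⊤ ∧ ∀ u h : Rn n → ℝ, MemA1 u → LocallyIntegrable h volume →
      (∀ᵐ x : Rn n ∂volume, maxOp h x < ⊤) →
      AqRConst q (fun x => u x * (maxOp h x).toReal ^ (1 - q)) < ⊤ ∧
      AqRConst q (fun x => u x * (maxOp h x).toReal ^ (1 - q)) ≤ C * A1Const u ^ (1 / q) := by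
  have hC0t : (2*(2*12^n) : ℝ≥0∞) ≠ ⊤ :=
    ENNReal.mul_ne_top (by norm_num)
      (ENNReal.mul_ne_top (by norm_num) (ENNReal.pow_ne_top (by norm_num)))
  refine ⟨2*(2*12^n), lt_top_iff_ne_top.2 hC0t, ?_⟩
  intro u h hu hh hMh
  obtain ⟨⟨hu_loc, hu_pos⟩, hA1⟩ := hu
  have hK : ∀ᵐ x : Rn n ∂volume, maxOp u x ≤ A1Const u * ENNReal.ofReal (u x) := by
    set S := {C : ℝ≥0∞ | ∀ᵐ x : Rn n ∂volume, maxOp u x ≤ C * ENNReal.ofReal (u x)} with hS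
    have hch : ∀ k : ℕ, ∃ C ∈ S, C < A1Const u + 1/(k+1) := by
      intro k
      refine sInf_lt_iff.1 ?_
      refine ENNReal.lt_add_right hA1.ne ?_
      simp [ENNReal.div_eq_zero_iff]
    choose Cs hCs1 hCs2 using hch
    have hae : ∀ᵐ x : Rn n ∂volume, ∀ k : ℕ, maxOp u x ≤ Cs k * ENNReal.ofReal (u x) :=
      ae_all_iff.2 fun k => hCs1 k
    filter_upwards [hae] with x hx
    have htend0 : Tendsto (fun k : ℕ => (1:ℝ≥0∞)/(k+1)) atTop (nhds 0) := by
      have h1 : Tendsto (fun m : ℕ => ((m:ℝ≥0∞))⁻¹) atTop (nhds 0) :=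
        ENNReal.tendsto_inv_nat_nhds_zero
      have h2 : Tendsto (fun k : ℕ => (((k+1:ℕ)) : ℝ≥0∞)⁻¹) atTop (nhds 0) :=
        h1.comp (tendsto_add_atTop_nat 1)
      convert h2 using 2 with k
      rw [one_div]
      norm_cast
    have htend : Tendsto (fun k : ℕ => (A1Const u + 1/(k+1)) * ENNReal.ofReal (u x)) atTop
        (nhds (A1Const u * ENNReal.ofReal (u x))) := by
      have h3 : Tendsto (fun k : ℕ => A1Const u + 1/(k+1)) atTop (nhds (A1Const u + 0)) :=
        Tendsto.const_add _ htend0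
      rw [add_zero] at h3
      exact ENNReal.Tendsto.mul_const h3 (Or.inr ENNReal.ofReal_ne_top)
    refine ge_of_tendsto' htend fun k => ?_
    exact le_trans (hx k) (mul_le_mul_left (hCs2 k).le _)
  have hkey := AqR.key hq u h hu_loc hu_pos hh hMh hA1.ne hK
  refine ⟨lt_of_le_of_lt hkey ?_, hkey⟩
  exact ENNReal.mul_lt_top (lt_top_iff_ne_top.2 hC0t)
    (ENNReal.rpow_lt_top_of_nonneg (by positivity) hA1.ne)
end
end
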